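/- If (T₁,T₂) has the skewed bivariate Birnbaum–Saunders density with parameters (α₁, α₂, β₁, β₂, λ), then the marginal density of T₁ is the univariate Birnbaum–Saunders density with parameters (α₁, β₁): for every t₁ > 0, ∫_0^∞ f(t₁,t₂) dt₂ = f_BS(t₁; α₁, β₁). -/

import Mathlib

open Real MeasureTheory

/-- Standard normal pdf. -/
noncomputable def phi (x : ℝ) : ℝ := (Real.sqrt (2 * Real.pi))⁻¹ * Real.exp (-x ^ 2 / 2)

/-- Standard normal cdf. -/
noncomputable def Phi (x : ℝ) : ℝ := ∫ t in Set.Iic x, phi t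

noncomputable def aj (a b t : ℝ) : ℝ := (1/a) * (Real.sqrt (t / b) - Real.sqrt (b / t))

/-- Skewed bivariate Birnbaum–Saunders density. -/
noncomputable def fSBVBS (a1 a2 b1 b2 l t1 t2 : ℝ) : ℝ :=
  2 * phi (aj a1 b1 t1) * phi (aj a2 b2 t2) * Phi (l * (aj a1 b1 t1) * (aj a2 b2 t2)) *
    (t1 ^ (-(3:ℝ)/2) * (t1 + b1) / (2 * a1 * Real.sqrt b1)) *
    (t2 ^ (-(3:ℝ)/2) * (t2 + b2) / (2 * a2 * Real.sqrt b2))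

/-- Birnbaum–Saunders density with shape α and scale β. -/
noncomputable def fBS (a b t : ℝ) : ℝ :=
  t ^ (-(3:ℝ)/2) * (t + b) / (2 * Real.sqrt (2 * Real.pi) * a * Real.sqrt b) *
    Real.exp (-(1/(2 * a ^ 2)) * (t / b + b / t - 2))

lemma phi_nonneg (x : ℝ) : 0 ≤ phi x := by unfold phi; positivity

lemma phi_eq : phi = fun x => (Real.sqrt (2 * Real.pi))⁻¹ * Real.exp (-(1/2) * x ^ 2) := by
  funext x; unfold phi; ring_nf

lemma phi_even (x : ℝ) : phi (-x) = phi x := by unfold phi; ring_nf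

lemma integrable_phi : Integrable phi := by
  rw [phi_eq]
  exact (integrable_exp_neg_mul_sq (show (0:ℝ) < 1/2 by norm_num)).const_mul _

lemma integral_phi : ∫ x, phi x = 1 := by
  rw [phi_eq]
  rw [MeasureTheory.integral_const_mul, integral_gaussian]
  rw [show Real.pi / (1/2) = 2 * Real.pi by ring]
  rw [inv_mul_cancel₀ (by positivity : Real.sqrt (2*Real.pi) ≠ 0)]

lemma Phi_nonneg (x : ℝ) : 0 ≤ Phi x :=
  setIntegral_nonneg measurableSet_Iic (fun y _ => phi_nonneg y)

lemma Phi_le_one (x : ℝ) : Phi x ≤ 1 := by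
  rw [← integral_phi]
  exact setIntegral_le_integral integrable_phi (Filter.Eventually.of_forall phi_nonneg)

lemma Phi_mono : Monotone Phi := by
  intro x y hxy
  exact setIntegral_mono_set integrable_phi.integrableOn
    (Filter.Eventually.of_forall phi_nonneg)
    (HasSubset.Subset.eventuallyLE (Set.Iic_subset_Iic.mpr hxy))

lemma Phi_add_neg (y : ℝ) : Phi y + Phi (-y) = 1 := by
  have h1 : Phi (-y) = ∫ x in Set.Ioi y, phi x := by
    unfold Phi
    rw [show Set.Ioi y = Set.Ioi (-(-y)) by rw [neg_neg], ← integral_comp_neg_Iic]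
    exact setIntegral_congr_fun measurableSet_Iic (fun x _ => (phi_even x).symm)
  rw [h1]
  unfold Phi
  rw [← integral_phi]
  exact _root_.intervalIntegral.integral_Iic_add_Ioi integrable_phi.integrableOn
    integrable_phi.integrableOn

lemma measurable_Phi : Measurable Phi := Phi_mono.measurable

lemma integrable_phi_Phi (c : ℝ) : Integrable (fun x => phi x * Phi (c * x)) := by
  refine Integrable.mono integrable_phi ?_ ?_
  · exact ((measurable_const.mul (Real.measurable_exp.comp
      ((measurable_id.pow_const 2).neg.div_const 2)) : Measurable phi).mul
      (measurable_Phi.comp (measurable_const.mul measurable_id))).aestronglyMeasurable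
  · refine Filter.Eventually.of_forall fun x => ?_
    rw [Real.norm_eq_abs, Real.norm_eq_abs, abs_mul, abs_of_nonneg (phi_nonneg x),
      abs_of_nonneg (Phi_nonneg _)]
    nlinarith [phi_nonneg x, Phi_le_one (c*x), Phi_nonneg (c*x)]

lemma integral_phi_Phi (c : ℝ) : ∫ x, phi x * Phi (c * x) = 1/2 := by
  have key : (∫ x, phi x * Phi (c * x)) + (∫ x, phi x * Phi (c * x)) = 1 := by
    have h1 : (∫ x, phi x * Phi (c * x)) = ∫ x, phi x * Phi (-(c * x)) := by
      rw [← MeasureTheory.integral_neg_eq_self (fun x => phi x * Phi (c * x)) volume]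
      congr 1; funext x; rw [phi_even]; ring_nf
    nth_rewrite 2 [h1]
    rw [← MeasureTheory.integral_add (integrable_phi_Phi c)]
    · rw [← integral_phi]
      congr 1; funext x
      have := Phi_add_neg (c * x)
      nlinarith [phi_nonneg x]
    · have : (fun x => phi x * Phi (-(c * x))) = fun x => phi (-x) * Phi (c * (-x)) := by
        funext x; rw [phi_even]; ring_nf
      rw [this]
      exact (integrable_phi_Phi c).comp_neg
  linarith

lemma aj_hasDerivAt (a b t : ℝ) (ha : 0 < a) (hb : 0 < b) (ht : 0 < t) :
    HasDerivAt (aj a b) (t ^ (-(3:ℝ)/2) * (t + b) / (2 * a * Real.sqrt b)) t := by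
  have htb : (0:ℝ) < t / b := div_pos ht hb
  have hbt : (0:ℝ) < b / t := div_pos hb ht
  have h1 : HasDerivAt (fun s : ℝ => s / b) (1 / b) t := by
    simpa using (hasDerivAt_id t).div_const b
  have h2 : HasDerivAt (fun s : ℝ => Real.sqrt (s / b))
      (1 / (2 * Real.sqrt (t / b)) * (1 / b)) t :=
    (Real.hasDerivAt_sqrt htb.ne').comp t h1
  have h3 : HasDerivAt (fun s : ℝ => b / s) ((0 * t - b * 1) / t ^ 2) t :=
    (hasDerivAt_const t b).div (hasDerivAt_id t) ht.ne'
  have h4 : HasDerivAt (fun s : ℝ => Real.sqrt (b / s))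
      (1 / (2 * Real.sqrt (b / t)) * ((0 * t - b * 1) / t ^ 2)) t :=
    (Real.hasDerivAt_sqrt hbt.ne').comp t h3
  have h5 := ((h2.sub h4).const_mul (1/a))
  have heq : aj a b = fun s => (1/a) * (Real.sqrt (s / b) - Real.sqrt (b / s)) := rfl
  rw [heq]
  convert h5 using 1
  · rfl
  · rfl
  · rfl
  have hst : (0:ℝ) < Real.sqrt t := Real.sqrt_pos.mpr ht
  have hsb : (0:ℝ) < Real.sqrt b := Real.sqrt_pos.mpr hb
  have e1 : Real.sqrt (t / b) = Real.sqrt t / Real.sqrt b := Real.sqrt_div ht.le b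
  have e2 : Real.sqrt (b / t) = Real.sqrt b / Real.sqrt t := Real.sqrt_div hb.le t
  have e3 : t ^ (-(3:ℝ)/2) = (Real.sqrt t ^ 3)⁻¹ := by
    rw [Real.sqrt_eq_rpow, ← Real.rpow_natCast (t ^ ((1:ℝ)/2)) 3, ← Real.rpow_mul ht.le,
      ← Real.rpow_neg ht.le]
    norm_num
  have ht2 : Real.sqrt t ^ 2 = t := Real.sq_sqrt ht.le
  have hb2 : Real.sqrt b ^ 2 = b := Real.sq_sqrt hb.le
  rw [e1, e2, e3]
  set st := Real.sqrt t with hstdef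
  set sb := Real.sqrt b with hsbdef
  rw [← ht2, ← hb2]
  field_simp
  ring

lemma aj_deriv_pos (a b t : ℝ) (ha : 0 < a) (hb : 0 < b) (ht : 0 < t) :
    0 < t ^ (-(3:ℝ)/2) * (t + b) / (2 * a * Real.sqrt b) := by
  have := Real.rpow_pos_of_pos ht (-(3:ℝ)/2)
  have := Real.sqrt_pos.mpr hb
  positivity

lemma aj_strictMonoOn (a b : ℝ) (ha : 0 < a) (hb : 0 < b) :
    StrictMonoOn (aj a b) (Set.Ioi 0) := by
  refine strictMonoOn_of_deriv_pos (convex_Ioi 0) ?_ ?_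
  · intro t ht
    exact ((aj_hasDerivAt a b t ha hb ht).differentiableAt.continuousAt).continuousWithinAt
  · intro t ht
    rw [interior_Ioi] at ht
    rw [(aj_hasDerivAt a b t ha hb ht).deriv]
    exact aj_deriv_pos a b t ha hb ht

lemma aj_image (a b : ℝ) (ha : 0 < a) (hb : 0 < b) :
    aj a b '' (Set.Ioi 0) = Set.univ := by
  refine Set.eq_univ_of_forall fun x => ?_
  set s := Real.sqrt ((a*x)^2 + 4) with hs
  have hs2 : s ^ 2 = (a*x)^2 + 4 := Real.sq_sqrt (by positivity)
  have hs0 : 0 ≤ s := Real.sqrt_nonneg _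
  set u := (a*x + s) / 2 with hu
  have hupos : 0 < u := by
    rw [hu]; nlinarith [hs2, hs0]
  refine ⟨b * u^2, ?_, ?_⟩
  · exact mul_pos hb (by positivity)
  · unfold aj
    have e1 : b * u^2 / b = u^2 := by field_simp
    have e2 : b / (b * u^2) = (u⁻¹)^2 := by field_simp
    rw [e1, e2, Real.sqrt_sq hupos.le, Real.sqrt_sq (by positivity)]
    have huq : u^2 - a*x*u - 1 = 0 := by nlinarith [hs2]
    field_simp
    nlinarith [huq]

theorem SBVBS_marginal (a1 a2 b1 b2 l t1 : ℝ)
    (ha1 : 0 < a1) (ha2 : 0 < a2) (hb1 : 0 < b1) (hb2 : 0 < b2) (ht1 : 0 < t1) :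
    ∫ t2 in Set.Ioi (0:ℝ), fSBVBS a1 a2 b1 b2 l t1 t2 = fBS a1 b1 t1 := by
  set c := l * aj a1 b1 t1 with hc
  set J1 := t1 ^ (-(3:ℝ)/2) * (t1 + b1) / (2 * a1 * Real.sqrt b1) with hJ1
  set g' := fun t : ℝ => t ^ (-(3:ℝ)/2) * (t + b2) / (2 * a2 * Real.sqrt b2) with hg'
  set h := fun x : ℝ => phi x * Phi (c * x) with hh
  -- step 1: rewrite integrand
  have step1 : ∫ t2 in Set.Ioi (0:ℝ), fSBVBS a1 a2 b1 b2 l t1 t2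
      = ∫ t2 in Set.Ioi (0:ℝ), (2 * phi (aj a1 b1 t1) * J1) * (|g' t2| • h (aj a2 b2 t2)) := by
    refine setIntegral_congr_fun measurableSet_Ioi (fun t2 ht2 => ?_)
    have hpos := aj_deriv_pos a2 b2 t2 ha2 hb2 ht2
    rw [smul_eq_mul, hh, hg']
    simp only [abs_of_pos hpos]
    unfold fSBVBS
    rw [hc, hJ1]
    ring_nf
  rw [step1, MeasureTheory.integral_const_mul]
  -- step 2: change of variables
  have step2 : ∫ t2 in Set.Ioi (0:ℝ), |g' t2| • h (aj a2 b2 t2) = ∫ x, h x := by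
    have := MeasureTheory.integral_image_eq_integral_abs_deriv_smul
      (measurableSet_Ioi (a := (0:ℝ)))
      (f := aj a2 b2) (f' := g')
      (fun t ht => (aj_hasDerivAt a2 b2 t ha2 hb2 ht).hasDerivWithinAt)
      ((aj_strictMonoOn a2 b2 ha2 hb2).injOn) h
    rw [aj_image a2 b2 ha2 hb2] at this
    rw [← this, MeasureTheory.setIntegral_univ]
  rw [step2, hh, integral_phi_Phi]
  -- step 3: algebra
  unfold fBS phi
  rw [hJ1]
  have haj2 : (aj a1 b1 t1) ^ 2 = (1 / a1 ^ 2) * (t1 / b1 + b1 / t1 - 2) := by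
    unfold aj
    have e1 : Real.sqrt (t1 / b1) = Real.sqrt t1 / Real.sqrt b1 := Real.sqrt_div ht1.le b1
    have e2 : Real.sqrt (b1 / t1) = Real.sqrt b1 / Real.sqrt t1 := Real.sqrt_div hb1.le t1
    have ht2 : Real.sqrt t1 ^ 2 = t1 := Real.sq_sqrt ht1.le
    have hb2' : Real.sqrt b1 ^ 2 = b1 := Real.sq_sqrt hb1.le
    have hst : (0:ℝ) < Real.sqrt t1 := Real.sqrt_pos.mpr ht1
    have hsb : (0:ℝ) < Real.sqrt b1 := Real.sqrt_pos.mpr hb1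
    rw [e1, e2, ← ht2, ← hb2']
    field_simp
    rw [Real.sqrt_sq hst.le, Real.sqrt_sq hsb.le]
    ring
  have hexp : -(aj a1 b1 t1) ^ 2 / 2 = -(1/(2 * a1 ^ 2)) * (t1 / b1 + b1 / t1 - 2) := by
    rw [haj2]; ring
  rw [hexp]
  have hsp : (0:ℝ) < Real.sqrt (2 * Real.pi) := Real.sqrt_pos.mpr (by positivity)
  have hsb : (0:ℝ) < Real.sqrt b1 := Real.sqrt_pos.mpr hb1
  field_simp
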